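/- arXiv:1011.4833 — 9 statements merged into one kernel-verified Lean document; each statement's English description precedes it below -/
import Mathlib

section
/- For all formulas F and G, F × G is classically equivalent to F ∨ G (every set of atoms satisfies one iff it satisfies the other), but F × G is not HT-equivalent to F ∨ G: for distinct atoms p and q, the theory {p ∨ q, q} has exactly one equilibrium model, namely ⟨{q},{q}⟩, whereas the theory {p × q, q} has exactly two equilibrium models, ⟨{q},{q}⟩ and ⟨{p,q},{p,q}⟩. -/
inductive Form (α : Type) : Type
  | atom : α → Form α
  | fls  : Form α
  | and  : Form α → Form α → Form α
  | or   : Form α → Form α → Form α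
  | imp  : Form α → Form α → Form α

namespace Form

variable {α : Type}

/-- ¬F abbreviates F → ⊥ -/
def neg (F : Form α) : Form α := imp F fls

/-- ⊤ abbreviates ⊥ → ⊥ -/
def tru : Form α := imp fls fls

/-- ordered disjunction F × G := F ∨ (¬F ∧ G) -/
def ox (F G : Form α) : Form α := or F (and (neg F) G)

/-- classical satisfaction -/
def csat (T : Set α) : Form α → Prop
  | atom p  => p ∈ T
  | fls     => False
  | and F G => csat T F ∧ csat T G
  | or F G  => csat T F ∨ csat T G
  | imp F G => csat T F → csat T G

/-- here-and-there satisfaction (for interpretations ⟨H,T⟩ with H ⊆ T) -/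
def htsat (H T : Set α) : Form α → Prop
  | atom p  => p ∈ H
  | fls     => False
  | and F G => htsat H T F ∧ htsat H T G
  | or F G  => htsat H T F ∨ htsat H T G
  | imp F G => (csat T F → csat T G) ∧ (¬ htsat H T F ∨ htsat H T G)

end Form

/-- HT-equivalence: satisfied by exactly the same HT-interpretations -/
def HTEquiv {α : Type} (F G : Form α) : Prop :=
  ∀ H T : Set α, H ⊆ T → (Form.htsat H T F ↔ Form.htsat H T G)

/-- ⟨T,T⟩ is an equilibrium model of the theory Γ -/
def EqModel {α : Type} (Γ : Set (Form α)) (T : Set α) : Prop :=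
  (∀ F ∈ Γ, Form.htsat T T F) ∧ ∀ H : Set α, H ⊂ T → ¬ (∀ F ∈ Γ, Form.htsat H T F)

/-- iterated ordered disjunction, associated to the left; ⊥ when empty -/
def oxList {α : Type} : List (Form α) → Form α
  | []      => Form.fls
  | a :: as => as.foldl Form.ox a

/-- iterated disjunction, associated to the left; ⊥ when empty -/
def orList {α : Type} : List (Form α) → Form α
  | []      => Form.fls
  | a :: as => as.foldl Form.or a

/-- iterated conjunction, associated to the left; ⊤ when empty -/
def andList {α : Type} : List (Form α) → Form α
  | []      => Form.tru
  | a :: as => as.foldl Form.and a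

theorem ox_classically_but_not_ht_equiv_or {α : Type} (p q : α) (hpq : p ≠ q) :
    (∀ (F G : Form α) (T : Set α),
        Form.csat T (Form.ox F G) ↔ Form.csat T (Form.or F G)) ∧
    ¬ HTEquiv (Form.ox (Form.atom p) (Form.atom q))
        (Form.or (Form.atom p) (Form.atom q)) ∧
    ({T : Set α |
        EqModel {Form.or (Form.atom p) (Form.atom q), Form.atom q} T} = {{q}}) ∧
    ({T : Set α |
        EqModel {Form.ox (Form.atom p) (Form.atom q), Form.atom q} T} =
      {{q}, {p, q}}) := by
  refine ⟨?_, ?_, ?_, ?_⟩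
  · intro F G T
    simp only [Form.ox, Form.csat, Form.neg]
    tauto
  · intro h
    have := (h {q} {p, q} (by intro x hx; simp at hx; simp [hx])).2
    simp [Form.ox, Form.htsat, Form.csat, Form.neg] at this
    exact hpq this
  · ext T
    simp only [Set.mem_setOf_eq, Set.mem_singleton_iff]
    constructor
    · rintro ⟨hsat, hmin⟩
      have hq : q ∈ T := by
        have := hsat (Form.atom q) (by simp)
        simpa [Form.htsat] using this
      by_contra hne
      apply hmin {q} ⟨by intro x hx; simp at hx; simp [hx, hq],
        by intro hsub; exact hne (Set.Subset.antisymm (by simpa [hq] using hsub) (by intro x hx; simp at hx; simp [hx, hq]))⟩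
      intro F hF
      simp only [Set.mem_insert_iff, Set.mem_singleton_iff] at hF
      rcases hF with rfl | rfl <;> simp [Form.htsat]
    · rintro rfl
      refine ⟨?_, ?_⟩
      · intro F hF
        simp only [Set.mem_insert_iff, Set.mem_singleton_iff] at hF
        rcases hF with rfl | rfl <;> simp [Form.htsat]
      · intro H hH hall
        have hqH : q ∉ H := fun hqh =>
          hH.2 (fun x hx => by
            have : x = q := by simpa using hx
            subst this; exact hqh)
        have := hall (Form.atom q) (by simp)
        simp [Form.htsat] at this
        exact hqH this
  · ext T
    simp only [Set.mem_setOf_eq, Set.mem_insert_iff, Set.mem_singleton_iff]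
    constructor
    · rintro ⟨hsat, hmin⟩
      have hq : q ∈ T := by
        have := hsat (Form.atom q) (by simp)
        simpa [Form.htsat] using this
      by_cases hp : p ∈ T
      · right
        by_contra hne
        apply hmin {p, q} ⟨by intro x hx; simp at hx; rcases hx with rfl|rfl; exacts [hp, hq],
          fun hsub => hne (Set.Subset.antisymm (fun x hx => by simpa using hsub hx)
            (by intro x hx; simp at hx; rcases hx with rfl|rfl; exacts [hp, hq]))⟩
        intro F hF
        simp only [Set.mem_insert_iff, Set.mem_singleton_iff] at hF
        rcases hF with rfl | rfl <;>
          simp [Form.ox, Form.htsat, Form.csat, Form.neg]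
      · left
        by_contra hne
        apply hmin {q} ⟨by intro x hx; simp at hx; simp [hx, hq],
          fun hsub => hne (Set.Subset.antisymm (by simpa [hq] using hsub)
            (by intro x hx; simp at hx; simp [hx, hq]))⟩
        intro F hF
        simp only [Set.mem_insert_iff, Set.mem_singleton_iff] at hF
        rcases hF with rfl | rfl <;>
          simp [Form.ox, Form.htsat, Form.csat, Form.neg, hp] <;> exact em _
    · rintro (rfl | rfl)
      · refine ⟨?_, ?_⟩
        · intro F hF
          simp only [Set.mem_insert_iff, Set.mem_singleton_iff] at hF
          rcases hF with rfl | rfl <;>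
            simp [Form.ox, Form.htsat, Form.csat, Form.neg, (Ne.symm hpq)] <;> exact em _
        · intro H hH hall
          have hqH : q ∉ H := fun hqh =>
            hH.2 (fun x hx => by
              have : x = q := by simpa using hx
              subst this; exact hqh)
          have := hall (Form.atom q) (by simp)
          simp [Form.htsat] at this
          exact hqH this
      · refine ⟨?_, ?_⟩
        · intro F hF
          simp only [Set.mem_insert_iff, Set.mem_singleton_iff] at hF
          rcases hF with rfl | rfl <;>
            simp [Form.ox, Form.htsat, Form.csat, Form.neg]
        · intro H hH hall
          have hq := hall (Form.atom q) (by simp)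
          simp [Form.htsat] at hq
          have hox := hall (Form.ox (Form.atom p) (Form.atom q)) (by simp)
          simp [Form.ox, Form.htsat, Form.csat, Form.neg] at hox
          exact absurd hox (fun hp => hH.2 (by intro x hx; simp at hx; rcases hx with rfl|rfl; exacts [hp, hq]))
end

section
/- For every formula F, the following HT-equivalences hold (each pair is satisfied by exactly the same HT-interpretations): F × F is HT-equivalent to F; ⊥ × F is HT-equivalent to F; F × ⊥ is HT-equivalent to F; ⊤ × F is HT-equivalent to ⊤; and F × ⊤ is HT-equivalent to F ∨ ¬F. -/
lemma htsat_csat {α : Type} (H T : Set α) (hs : H ⊆ T) :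
    ∀ F : Form α, Form.htsat H T F → Form.csat T F := by
  intro F
  induction F with
  | atom p => exact fun h => hs h
  | fls => exact id
  | and F G ihF ihG => exact fun h => ⟨ihF h.1, ihG h.2⟩
  | or F G ihF ihG => exact fun h => h.elim (fun hF => Or.inl (ihF hF)) (fun hG => Or.inr (ihG hG))
  | imp F G ihF ihG => exact fun h => h.1

theorem ox_truth_constants {α : Type} (F : Form α) :
    HTEquiv (Form.ox F F) F ∧
    HTEquiv (Form.ox Form.fls F) F ∧
    HTEquiv (Form.ox F Form.fls) F ∧
    HTEquiv (Form.ox Form.tru F) Form.tru ∧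
    HTEquiv (Form.ox F Form.tru) (Form.or F (Form.neg F)) := by
  refine ⟨?_, ?_, ?_, ?_, ?_⟩ <;> intro H T hs <;>
    simp only [Form.ox, Form.neg, Form.tru, Form.htsat, Form.csat] <;>
    constructor <;> intro h
  · rcases h with h | ⟨_, h⟩ <;> exact h
  · exact Or.inl h
  · rcases h with h | ⟨_, h⟩
    · exact h.elim
    · exact h
  · exact Or.inr ⟨⟨fun x => x.elim, Or.inl (fun x => x)⟩, h⟩
  · rcases h with h | ⟨⟨_, h2⟩, h⟩
    · exact h
    · exact h.elim
  · exact Or.inl h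
  · exact ⟨fun x => x, Or.inl fun x => x⟩
  · exact Or.inl ⟨fun x => x, Or.inl fun x => x⟩
  · rcases h with h | ⟨h1, _⟩
    · exact Or.inl h
    · exact Or.inr h1
  · rcases h with h | h1
    · exact Or.inl h
    · exact Or.inr ⟨h1, ⟨fun x => x, Or.inl fun x => x⟩⟩
end

section
/- Ordered disjunction does not left-distribute a conjunction: for distinct atoms f, g, h, the theory {(f ∧ g) × h} has exactly two equilibrium models, ⟨{f,g},{f,g}⟩ and ⟨{h},{h}⟩, whereas the theory {(f × h) ∧ (g × h)} has exactly four equilibrium models, with T ranging over {f,g}, {h}, {f,h} and {g,h}. In particular (f ∧ g) × h and (f × h) ∧ (g × h) are not HT-equivalent. -/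
lemma htA {α : Type} (f g h : α) (H T : Set α) :
    Form.htsat H T (Form.ox (Form.and (Form.atom f) (Form.atom g)) (Form.atom h)) ↔
    (f ∈ H ∧ g ∈ H) ∨ (¬(f ∈ T ∧ g ∈ T) ∧ ¬(f ∈ H ∧ g ∈ H) ∧ h ∈ H) := by
  simp only [Form.ox, Form.neg, Form.htsat, Form.csat]
  tauto

lemma htB {α : Type} (f g h : α) (H T : Set α) :
    Form.htsat H T (Form.and (Form.ox (Form.atom f) (Form.atom h))
                             (Form.ox (Form.atom g) (Form.atom h))) ↔
    (f ∈ H ∨ (f ∉ T ∧ f ∉ H ∧ h ∈ H)) ∧ (g ∈ H ∨ (g ∉ T ∧ g ∉ H ∧ h ∈ H)) := by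
  simp only [Form.ox, Form.neg, Form.htsat, Form.csat]
  tauto

lemma eq_of_sub_not_ssub {α : Type} {H T : Set α} (hsub : H ⊆ T) (hns : ¬ H ⊂ T) :
    T = H := by
  rw [Set.ssubset_def] at hns
  push_neg at hns
  exact Set.Subset.antisymm (hns hsub) hsub

lemma eqA {α : Type} (f g h : α) (hfg : f ≠ g) (hfh : f ≠ h) (hgh : g ≠ h) (T : Set α) :
    EqModel {Form.ox (Form.and (Form.atom f) (Form.atom g)) (Form.atom h)} T ↔
    (T = {f, g} ∨ T = {h}) := by
  have hgf := hfg.symm; have hhf := hfh.symm; have hhg := hgh.symm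
  unfold EqModel
  simp only [Set.mem_singleton_iff, forall_eq, htA]
  constructor
  · rintro ⟨hsat, hmin⟩
    by_cases hc : f ∈ T ∧ g ∈ T
    · left
      have hsub : ({f, g} : Set α) ⊆ T := by simp [Set.insert_subset_iff, hc.1, hc.2]
      have hns : ¬ ({f, g} : Set α) ⊂ T := fun hss =>
        hmin _ hss (Or.inl ⟨by simp, by simp⟩)
      exact eq_of_sub_not_ssub hsub hns
    · right
      have hh : h ∈ T := by
        rcases hsat with ⟨hf, hg⟩ | ⟨_, _, hh⟩
        · exact absurd ⟨hf, hg⟩ hc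
        · exact hh
      have hsub : ({h} : Set α) ⊆ T := by simp [hh]
      have hns : ¬ ({h} : Set α) ⊂ T := fun hss =>
        hmin _ hss (Or.inr ⟨hc, by simp [hfh, hgh], by simp⟩)
      exact eq_of_sub_not_ssub hsub hns
  · rintro (rfl | rfl)
    · refine ⟨Or.inl ⟨by simp, by simp⟩, ?_⟩
      rintro H hH (⟨hf, hg⟩ | ⟨hnc, _, _⟩)
      · exact hH.2 (by simp [Set.insert_subset_iff, hf, hg])
      · exact hnc ⟨by simp, by simp⟩
    · refine ⟨Or.inr ⟨by simp [hfh], by simp [hfh], by simp⟩, ?_⟩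
      rintro H hH (⟨hf, _⟩ | ⟨_, _, hh⟩)
      · exact hfh (hH.1 hf)
      · exact hH.2 (by simp [hh])

lemma eqB {α : Type} (f g h : α) (hfg : f ≠ g) (hfh : f ≠ h) (hgh : g ≠ h) (T : Set α) :
    EqModel {Form.and (Form.ox (Form.atom f) (Form.atom h))
                      (Form.ox (Form.atom g) (Form.atom h))} T ↔
    (T = {f, g} ∨ T = {h} ∨ T = {f, h} ∨ T = {g, h}) := by
  have hgf := hfg.symm; have hhf := hfh.symm; have hhg := hgh.symm
  unfold EqModel
  simp only [Set.mem_singleton_iff, forall_eq, htB]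
  constructor
  · rintro ⟨⟨hsf, hsg⟩, hmin⟩
    by_cases hf : f ∈ T <;> by_cases hg : g ∈ T
    · left
      have hsub : ({f, g} : Set α) ⊆ T := by simp [Set.insert_subset_iff, hf, hg]
      have hns : ¬ ({f, g} : Set α) ⊂ T := fun hss =>
        hmin _ hss ⟨Or.inl (by simp), Or.inl (by simp)⟩
      exact eq_of_sub_not_ssub hsub hns
    · right; right; left
      have hh : h ∈ T := by rcases hsg with hg' | ⟨_, _, hh⟩; exacts [absurd hg' hg, hh]
      have hsub : ({f, h} : Set α) ⊆ T := by simp [Set.insert_subset_iff, hf, hh]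
      have hns : ¬ ({f, h} : Set α) ⊂ T := fun hss =>
        hmin _ hss ⟨Or.inl (by simp), Or.inr ⟨hg, by simp [hgf, hgh], by simp⟩⟩
      exact eq_of_sub_not_ssub hsub hns
    · right; right; right
      have hh : h ∈ T := by rcases hsf with hf' | ⟨_, _, hh⟩; exacts [absurd hf' hf, hh]
      have hsub : ({g, h} : Set α) ⊆ T := by simp [Set.insert_subset_iff, hg, hh]
      have hns : ¬ ({g, h} : Set α) ⊂ T := fun hss =>
        hmin _ hss ⟨Or.inr ⟨hf, by simp [hfg, hfh], by simp⟩, Or.inl (by simp)⟩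
      exact eq_of_sub_not_ssub hsub hns
    · right; left
      have hh : h ∈ T := by rcases hsf with hf' | ⟨_, _, hh⟩; exacts [absurd hf' hf, hh]
      have hsub : ({h} : Set α) ⊆ T := by simp [hh]
      have hns : ¬ ({h} : Set α) ⊂ T := fun hss =>
        hmin _ hss ⟨Or.inr ⟨hf, by simp [hfh], by simp⟩, Or.inr ⟨hg, by simp [hgh], by simp⟩⟩
      exact eq_of_sub_not_ssub hsub hns
  · rintro (rfl | rfl | rfl | rfl)
    · refine ⟨⟨Or.inl (by simp), Or.inl (by simp)⟩, ?_⟩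
      rintro H hH ⟨hsf, hsg⟩
      have hf : f ∈ H := by rcases hsf with hf | ⟨hnf, _, _⟩; exacts [hf, absurd (by simp) hnf]
      have hg : g ∈ H := by rcases hsg with hg | ⟨hng, _, _⟩; exacts [hg, absurd (by simp) hng]
      exact hH.2 (by simp [Set.insert_subset_iff, hf, hg])
    · refine ⟨⟨Or.inr ⟨by simp [hfh], by simp [hfh], by simp⟩,
               Or.inr ⟨by simp [hgh], by simp [hgh], by simp⟩⟩, ?_⟩
      rintro H hH ⟨hsf, _⟩
      have hh : h ∈ H := by
        rcases hsf with hf | ⟨_, _, hh⟩; exacts [absurd (hH.1 hf) (by simp [hfh]), hh]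
      exact hH.2 (by simp [hh])
    · refine ⟨⟨Or.inl (by simp), Or.inr ⟨by simp [hgf, hgh],
               by simp [hgf, hgh], by simp⟩⟩, ?_⟩
      rintro H hH ⟨hsf, hsg⟩
      have hf : f ∈ H := by rcases hsf with hf | ⟨hnf, _, _⟩; exacts [hf, absurd (by simp) hnf]
      have hh : h ∈ H := by
        rcases hsg with hg | ⟨_, _, hh⟩
        · exact absurd (hH.1 hg) (by simp [hgf, hgh])
        · exact hh
      exact hH.2 (by simp [Set.insert_subset_iff, hf, hh])
    · refine ⟨⟨Or.inr ⟨by simp [hfg, hfh], by simp [hfg, hfh], by simp⟩, Or.inl (by simp)⟩, ?_⟩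
      rintro H hH ⟨hsf, hsg⟩
      have hg : g ∈ H := by rcases hsg with hg | ⟨hng, _, _⟩; exacts [hg, absurd (by simp) hng]
      have hh : h ∈ H := by
        rcases hsf with hf | ⟨_, _, hh⟩
        · exact absurd (hH.1 hf) (by simp [hfg, hfh])
        · exact hh
      exact hH.2 (by simp [Set.insert_subset_iff, hg, hh])

theorem ox_no_left_distrib_over_and {α : Type} (f g h : α)
    (hfg : f ≠ g) (hfh : f ≠ h) (hgh : g ≠ h) :
    ({T : Set α |
        EqModel {Form.ox (Form.and (Form.atom f) (Form.atom g)) (Form.atom h)} T} =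
      {{f, g}, {h}}) ∧
    ({T : Set α |
        EqModel {Form.and (Form.ox (Form.atom f) (Form.atom h))
                          (Form.ox (Form.atom g) (Form.atom h))} T} =
      {{f, g}, {h}, {f, h}, {g, h}}) ∧
    ¬ HTEquiv (Form.ox (Form.and (Form.atom f) (Form.atom g)) (Form.atom h))
        (Form.and (Form.ox (Form.atom f) (Form.atom h))
                  (Form.ox (Form.atom g) (Form.atom h))) := by
  refine ⟨?_, ?_, ?_⟩
  · ext T
    simp only [Set.mem_setOf_eq, Set.mem_insert_iff, Set.mem_singleton_iff]
    exact eqA f g h hfg hfh hgh T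
  · ext T
    simp only [Set.mem_setOf_eq, Set.mem_insert_iff, Set.mem_singleton_iff]
    exact eqB f g h hfg hfh hgh T
  · intro heq
    have hB : EqModel {Form.and (Form.ox (Form.atom f) (Form.atom h))
                                (Form.ox (Form.atom g) (Form.atom h))} ({f, h} : Set α) :=
      (eqB f g h hfg hfh hgh _).mpr (Or.inr (Or.inr (Or.inl rfl)))
    have hA : EqModel {Form.ox (Form.and (Form.atom f) (Form.atom g)) (Form.atom h)}
        ({f, h} : Set α) := by
      refine ⟨?_, ?_⟩
      · intro F hF
        rw [Set.mem_singleton_iff] at hF; subst hF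
        exact (heq _ _ (le_refl _)).mpr (hB.1 _ (Set.mem_singleton _))
      · intro H hH hall
        refine hB.2 H hH ?_
        intro F hF
        rw [Set.mem_singleton_iff] at hF; subst hF
        exact (heq _ _ hH.1).mp (hall _ (Set.mem_singleton _))
    rcases (eqA f g h hfg hfh hgh _).mp hA with heq1 | heq1
    · have : h ∈ ({f, g} : Set α) := heq1 ▸ (by simp : h ∈ ({f, h} : Set α))
      simp [hfh.symm, hgh.symm] at this
    · have : f ∈ ({h} : Set α) := heq1 ▸ (by simp : f ∈ ({f, h} : Set α))
      simp [hfh] at this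
end

section
/- For all formulas F, G, H, the formula F × (G ∨ H) is HT-equivalent to (F × G) ∨ (F × H): every HT-interpretation satisfies one iff it satisfies the other. -/
theorem ox_distrib_over_or_right {α : Type} (F G K : Form α) :
    HTEquiv (Form.ox F (Form.or G K)) (Form.or (Form.ox F G) (Form.ox F K)) := by
  intro H T _
  simp only [Form.ox, Form.neg, Form.htsat, Form.csat]
  tauto
end

section
/- Regular disjunction does not left-distribute over ordered disjunction: for distinct atoms f, g, h, the theory {f ∨ (g × h), h} has exactly two equilibrium models, ⟨{g,h},{g,h}⟩ and ⟨{h},{h}⟩, whereas ⟨{f,h},{f,h}⟩ is an equilibrium model of the theory {(f ∨ g) × (f ∨ h), h}. In particular f ∨ (g × h) and (f ∨ g) × (f ∨ h) are not HT-equivalent. -/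
theorem or_no_left_distrib_over_ox {α : Type} (f g h : α)
    (hfg : f ≠ g) (hfh : f ≠ h) (hgh : g ≠ h) :
    ({T : Set α |
        EqModel {Form.or (Form.atom f) (Form.ox (Form.atom g) (Form.atom h)),
                 Form.atom h} T} = {{g, h}, {h}}) ∧
    EqModel {Form.ox (Form.or (Form.atom f) (Form.atom g))
                     (Form.or (Form.atom f) (Form.atom h)),
             Form.atom h} {f, h} ∧
    ¬ HTEquiv (Form.or (Form.atom f) (Form.ox (Form.atom g) (Form.atom h)))
        (Form.ox (Form.or (Form.atom f) (Form.atom g))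
                 (Form.or (Form.atom f) (Form.atom h))) := by
  refine ⟨?_, ?_, ?_⟩
  · ext T
    simp only [Set.mem_setOf_eq, Set.mem_insert_iff, Set.mem_singleton_iff]
    constructor
    · rintro ⟨hsat, hmin⟩
      have hh : h ∈ T := hsat (Form.atom h) (by simp)
      by_cases hg : g ∈ T
      · left
        by_contra hne
        have hsub : ({g, h} : Set α) ⊆ T := by
          intro x hx
          rcases hx with rfl | hx
          · exact hg
          · rw [Set.mem_singleton_iff] at hx
            subst hx; exact hh
        refine hmin {g, h} (hsub.ssubset_of_ne (Ne.symm hne)) ?_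
        intro F hF
        rcases hF with rfl | hF
        · simp [Form.htsat, Form.csat, Form.ox, Form.neg]
        · rw [Set.mem_singleton_iff] at hF
          subst hF
          simp [Form.htsat, Form.csat]
      · right
        by_contra hne
        have hsub : ({h} : Set α) ⊆ T := by
          intro x hx
          rw [Set.mem_singleton_iff] at hx
          subst hx; exact hh
        refine hmin {h} (hsub.ssubset_of_ne (Ne.symm hne)) ?_
        intro F hF
        rcases hF with rfl | hF
        · simp [Form.htsat, Form.csat, Form.ox, Form.neg]
          tauto
        · rw [Set.mem_singleton_iff] at hF
          subst hF
          simp [Form.htsat, Form.csat]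
    · rintro (rfl | rfl)
      · constructor
        · intro F hF
          rcases hF with rfl | hF
          · simp [Form.htsat, Form.csat, Form.ox, Form.neg]
          · rw [Set.mem_singleton_iff] at hF
            subst hF
            simp [Form.htsat, Form.csat]
        · rintro H hss hall
          have h1 := hall _ (Set.mem_insert _ _)
          have h2 := hall (Form.atom h) (by simp)
          simp only [Form.htsat, Form.csat, Form.ox, Form.neg] at h1 h2
          have hgH : g ∈ H := by
            rcases h1 with hf | hg | ⟨⟨hc, _⟩, _⟩
            · exact absurd (hss.1 hf) (by simp [hfg, hfh])
            · exact hg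
            · exact (hc (by simp)).elim
          apply hss.2
          intro x hx
          rcases hx with rfl | hx
          · exact hgH
          · rw [Set.mem_singleton_iff] at hx
            subst hx; exact h2
      · constructor
        · intro F hF
          rcases hF with rfl | hF
          · simp [Form.htsat, Form.csat, Form.ox, Form.neg]
            tauto
          · rw [Set.mem_singleton_iff] at hF
            subst hF
            simp [Form.htsat, Form.csat]
        · rintro H hss hall
          have h2 := hall (Form.atom h) (by simp)
          simp only [Form.htsat] at h2
          apply hss.2
          intro x hx
          rw [Set.mem_singleton_iff] at hx
          subst hx; exact h2
  · constructor
    · intro F hF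
      rcases hF with rfl | hF
      · simp [Form.htsat, Form.csat, Form.ox, Form.neg]
      · rw [Set.mem_singleton_iff] at hF
        subst hF
        simp [Form.htsat, Form.csat]
    · rintro H hss hall
      have h1 := hall _ (Set.mem_insert _ _)
      have h2 := hall (Form.atom h) (by simp)
      simp only [Form.htsat, Form.csat, Form.ox, Form.neg] at h1 h2
      have hfH : f ∈ H := by
        rcases h1 with (hf | hg) | ⟨⟨hc, _⟩, _⟩
        · exact hf
        · exact absurd (hss.1 hg) (by simp [hfg.symm, hgh])
        · exact (hc (by simp)).elim
      apply hss.2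
      intro x hx
      rcases hx with rfl | hx
      · exact hfH
      · rw [Set.mem_singleton_iff] at hx
        subst hx; exact h2
  · intro heq
    have key := (heq {h} {f, h} (by
      intro x hx
      rw [Set.mem_singleton_iff] at hx
      subst hx; simp)).mp
    simp only [Form.htsat, Form.csat, Form.ox, Form.neg] at key
    have hant : f ∈ ({h} : Set α) ∨ g ∈ ({h} : Set α) ∨
        ((g ∈ ({f, h} : Set α) → False) ∧ (g ∉ ({h} : Set α) ∨ False)) ∧
          h ∈ ({h} : Set α) := by
      refine Or.inr (Or.inr ⟨⟨?_, Or.inl ?_⟩, rfl⟩)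
      · rintro (rfl | hc)
        · exact hfg rfl
        · rw [Set.mem_singleton_iff] at hc
          exact hgh hc
      · rw [Set.mem_singleton_iff]
        exact hgh
    have hev := key hant
    rcases hev with hf | ⟨⟨hc, _⟩, _⟩
    · rcases hf with hf | hf
      · rw [Set.mem_singleton_iff] at hf
        exact hfh hf
      · rw [Set.mem_singleton_iff] at hf
        exact hgh hf
    · exact hc (Or.inl (by simp))
end

section
/- Regular disjunction does not right-distribute over ordered disjunction: for distinct atoms f, g, h, the theory {(f × g) ∨ h, g} has exactly two equilibrium models, ⟨{f,g},{f,g}⟩ and ⟨{g},{g}⟩, whereas ⟨{g,h},{g,h}⟩ is an equilibrium model of the theory {(f ∨ h) × (g ∨ h), g}. In particular (f × g) ∨ h and (f ∨ h) × (g ∨ h) are not HT-equivalent. -/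
theorem or_no_right_distrib_over_ox {α : Type} (f g h : α)
    (hfg : f ≠ g) (hfh : f ≠ h) (hgh : g ≠ h) :
    ({T : Set α |
        EqModel {Form.or (Form.ox (Form.atom f) (Form.atom g)) (Form.atom h),
                 Form.atom g} T} = {{f, g}, {g}}) ∧
    EqModel {Form.ox (Form.or (Form.atom f) (Form.atom h))
                     (Form.or (Form.atom g) (Form.atom h)),
             Form.atom g} {g, h} ∧
    ¬ HTEquiv (Form.or (Form.ox (Form.atom f) (Form.atom g)) (Form.atom h))
        (Form.ox (Form.or (Form.atom f) (Form.atom h))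
                 (Form.or (Form.atom g) (Form.atom h))) := by
  have hgf := hfg.symm
  have hhf := hfh.symm
  have hhg := hgh.symm
  refine ⟨?_, ?_, ?_⟩
  · ext T
    simp only [Set.mem_setOf_eq, Set.mem_insert_iff, Set.mem_singleton_iff, EqModel,
      Set.mem_setOf_eq, Form.ox, Form.neg, Form.htsat, Form.csat, forall_eq_or_imp, forall_eq]
    constructor
    · rintro ⟨⟨hF1, hg⟩, hmin⟩
      -- T ⊆ {f, g}
      have hsub : T ⊆ ({f, g} : Set α) := by
        by_contra hns
        have hss : T ∩ ({f, g} : Set α) ⊂ T := by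
          constructor
          · exact Set.inter_subset_left
          · intro hTle
            exact hns fun x hx => (hTle hx).2
        refine hmin _ hss ⟨?_, hg, Or.inr rfl⟩
        by_cases hfT : f ∈ T
        · exact Or.inl (Or.inl ⟨hfT, Or.inl rfl⟩)
        · exact Or.inl (Or.inr ⟨⟨fun hc => hfT hc, Or.inl fun hc => hfT hc.1⟩, hg, Or.inr rfl⟩)
      by_cases hfT : f ∈ T
      · left
        apply Set.Subset.antisymm hsub
        intro x hx
        rcases hx with rfl | rfl
        · exact hfT
        · exact hg
      · right
        apply Set.Subset.antisymm
        · intro x hx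
          rcases hsub hx with rfl | rfl
          · exact absurd hx hfT
          · rfl
        · intro x hx; rcases hx with rfl; exact hg
    · rintro (rfl | rfl)
      · refine ⟨⟨Or.inl (Or.inl (Or.inl rfl)), Or.inr rfl⟩, ?_⟩
        rintro H ⟨hHsub, hHne⟩ ⟨hF1, hgH⟩
        apply hHne
        intro x hx
        rcases hx with rfl | rfl
        · rcases hF1 with (hf | ⟨⟨hni, -⟩, -⟩) | hh
          · exact hf
          · exact absurd (Or.inl rfl) hni
          · rcases hHsub hh with rfl | rfl
            · exact absurd rfl hfh
            · exact absurd rfl hgh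
        · exact hgH
      · refine ⟨⟨Or.inl (Or.inr ⟨⟨fun hc => hfg hc, Or.inl fun hc => hfg hc⟩, rfl⟩), rfl⟩, ?_⟩
        rintro H ⟨hHsub, hHne⟩ ⟨-, hgH⟩
        exact hHne fun x hx => by rcases hx with rfl; exact hgH
  · constructor
    · intro F hF
      rcases hF with rfl | hF
      · exact Or.inl (Or.inr (Or.inr rfl))
      · rcases hF with rfl
        exact Or.inl rfl
    · rintro H ⟨hHsub, hHne⟩ hall
      have hgH : g ∈ H := hall (Form.atom g) (Or.inr rfl)
      have hhH : h ∉ H := by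
        intro hhH
        apply hHne
        intro x hx
        rcases hx with rfl | rfl
        · exact hgH
        · exact hhH
      have hF2 := hall _ (Or.inl rfl)
      rcases hF2 with (hfH | hhH') | ⟨⟨hni, -⟩, -⟩
      · rcases hHsub hfH with rfl | rfl
        · exact hfg rfl
        · exact hfh rfl
      · exact hhH hhH'
      · exact hni (Or.inr (Or.inr rfl))
  · intro heq
    have hsub : ({g} : Set α) ⊆ ({g, h} : Set α) := by
      intro x hx; rcases hx with rfl; exact Or.inl rfl
    have := (heq {g} {g, h} hsub).mp
    have h1 : Form.htsat ({g} : Set α) ({g, h} : Set α)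
        (Form.or (Form.ox (Form.atom f) (Form.atom g)) (Form.atom h)) := by
      refine Or.inl (Or.inr ⟨⟨?_, Or.inl ?_⟩, rfl⟩)
      · rintro (rfl | rfl); exact hgf rfl; exact hhf rfl
      · rintro rfl; exact hgf rfl
    have h2 := this h1
    rcases h2 with (hf | hh) | ⟨⟨hni, -⟩, -⟩
    · rcases hf with rfl; exact hgf rfl
    · rcases hh with rfl; exact hgh rfl
    · exact hni (Or.inr (Or.inr rfl))
end

section
/- Let A be a list of n ≥ 0 formulas. Then the iterated ordered disjunction (×A) is HT-equivalent to the disjunction, over i = 1,…,n, of the formulas (∧¬A[1..i−1]) ∧ A[i], where ¬A[1..i−1] is the list of negations of the first i−1 elements of A. -/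
namespace Aux
open Form

variable {α : Type} {H T : Set α}

lemma persist (hHT : H ⊆ T) : ∀ F : Form α, htsat H T F → csat T F := by
  intro F
  induction F with
  | atom p => exact fun h => hHT h
  | fls => exact id
  | and F G ihF ihG => exact fun h => ⟨ihF h.1, ihG h.2⟩
  | or F G ihF ihG => exact fun h => h.elim (fun h => Or.inl (ihF h)) (fun h => Or.inr (ihG h))
  | imp F G ihF ihG => exact fun h => h.1

lemma htsat_neg (hHT : H ⊆ T) (F : Form α) : htsat H T (neg F) ↔ ¬ csat T F := by
  simp only [neg, htsat, csat]
  constructor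
  · rintro ⟨h1, h2⟩ hc; exact h1 hc
  · intro h; exact ⟨h, Or.inl fun hh => h (persist hHT F hh)⟩

lemma csat_ox (F G : Form α) : csat T (ox F G) ↔ csat T F ∨ csat T G := by
  simp only [ox, neg, csat]; tauto

lemma htsat_ox (hHT : H ⊆ T) (F G : Form α) :
    htsat H T (ox F G) ↔ htsat H T F ∨ (¬ csat T F ∧ htsat H T G) := by
  show htsat H T F ∨ (htsat H T (neg F) ∧ htsat H T G) ↔ _
  rw [htsat_neg hHT]

/-- semantic ordered disjunction -/
def OxSem (H T : Set α) : List (Form α) → Prop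
  | [] => False
  | a :: L => htsat H T a ∨ (¬ csat T a ∧ OxSem H T L)

lemma htsat_foldl_ox (hHT : H ⊆ T) :
    ∀ (L : List (Form α)) (a : Form α), htsat H T (L.foldl ox a) ↔ OxSem H T (a :: L) := by
  intro L
  induction L with
  | nil => intro a; simp [OxSem]
  | cons b L ih =>
      intro a
      show htsat H T (L.foldl ox (ox a b)) ↔ _
      rw [ih (ox a b)]
      show htsat H T (ox a b) ∨ (¬ csat T (ox a b) ∧ OxSem H T L) ↔
        htsat H T a ∨ (¬ csat T a ∧ (htsat H T b ∨ (¬ csat T b ∧ OxSem H T L)))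
      rw [htsat_ox hHT, csat_ox]
      tauto

lemma htsat_foldl_or :
    ∀ (L : List (Form α)) (a : Form α),
      htsat H T (L.foldl .or a) ↔ htsat H T a ∨ ∃ x ∈ L, htsat H T x := by
  intro L
  induction L with
  | nil => simp
  | cons b L ih =>
      intro a
      show htsat H T (L.foldl .or (.or a b)) ↔ _
      rw [ih]
      show (htsat H T a ∨ htsat H T b) ∨ _ ↔ _
      simp only [List.mem_cons]
      constructor
      · rintro ((h | h) | ⟨x, hx, h⟩)
        · exact Or.inl h
        · exact Or.inr ⟨b, Or.inl rfl, h⟩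
        · exact Or.inr ⟨x, Or.inr hx, h⟩
      · rintro (h | ⟨x, (rfl | hx), h⟩)
        · exact Or.inl (Or.inl h)
        · exact Or.inl (Or.inr h)
        · exact Or.inr ⟨x, hx, h⟩

lemma htsat_tru : htsat H T (tru (α := α)) := by
  exact ⟨id, Or.inl (fun h => h)⟩

lemma htsat_foldl_and :
    ∀ (L : List (Form α)) (a : Form α),
      htsat H T (L.foldl .and a) ↔ htsat H T a ∧ ∀ x ∈ L, htsat H T x := by
  intro L
  induction L with
  | nil => simp
  | cons b L ih =>
      intro a
      show htsat H T (L.foldl .and (.and a b)) ↔ _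
      rw [ih]
      show (htsat H T a ∧ htsat H T b) ∧ _ ↔ _
      simp only [List.mem_cons]
      constructor
      · rintro ⟨⟨ha, hb⟩, h⟩
        exact ⟨ha, fun x hx => hx.elim (fun e => e ▸ hb) (h x)⟩
      · rintro ⟨ha, h⟩
        exact ⟨⟨ha, h b (Or.inl rfl)⟩, fun x hx => h x (Or.inr hx)⟩

end Aux

namespace Aux
open Form

variable {α : Type} {H T : Set α}

lemma oxsem_iff (A : List (Form α)) :
    OxSem H T A ↔ ∃ i : Fin A.length,
      (∀ x ∈ A.take i.1, ¬ csat T x) ∧ htsat H T (A.get i) := by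
  induction A with
  | nil =>
      simp only [OxSem, List.length_nil]
      constructor
      · exact False.elim
      · rintro ⟨i, _⟩; exact absurd i.2 (Nat.not_lt_zero _)
  | cons a L ih =>
      show htsat H T a ∨ (¬ csat T a ∧ OxSem H T L) ↔ _
      rw [ih]
      constructor
      · rintro (h | ⟨hna, i, h1, h2⟩)
        · exact ⟨⟨0, Nat.succ_pos _⟩, by simp, h⟩
        · refine ⟨⟨i.1 + 1, Nat.succ_lt_succ i.2⟩, ?_, ?_⟩
          · intro x hx
            simp only [List.take_succ_cons, List.mem_cons] at hx
            rcases hx with rfl | hx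
            · exact hna
            · exact h1 x hx
          · exact h2
      · rintro ⟨⟨i, hi⟩, h1, h2⟩
        cases i with
        | zero => exact Or.inl h2
        | succ j =>
            refine Or.inr ⟨h1 a (by simp), ⟨j, Nat.lt_of_succ_lt_succ hi⟩, ?_, h2⟩
            intro x hx
            exact h1 x (by simp only [List.take_succ_cons, List.mem_cons]; exact Or.inr hx)

lemma htsat_oxList (hHT : H ⊆ T) (A : List (Form α)) :
    htsat H T (oxList A) ↔ OxSem H T A := by
  cases A with
  | nil => simp [oxList, OxSem, htsat]
  | cons a L => exact htsat_foldl_ox hHT L a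

lemma htsat_orList (A : List (Form α)) :
    htsat H T (orList A) ↔ ∃ x ∈ A, htsat H T x := by
  cases A with
  | nil => simp [orList, htsat]
  | cons a L =>
      rw [show orList (a :: L) = L.foldl .or a from rfl, htsat_foldl_or]
      simp

lemma htsat_andList (A : List (Form α)) :
    htsat H T (andList A) ↔ ∀ x ∈ A, htsat H T x := by
  cases A with
  | nil => simp [andList, htsat_tru]
  | cons a L =>
      rw [show andList (a :: L) = L.foldl .and a from rfl, htsat_foldl_and]
      simp

end Aux

/-- (×A) is HT-equivalent to ⋁_{i=1..n} (∧¬A[1..i−1]) ∧ A[i]. -/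
theorem oxList_unfold_disjunction {α : Type} (A : List (Form α)) :
    HTEquiv (oxList A)
      (orList ((List.range A.length).attach.map (fun i =>
        Form.and (andList ((A.take i.1).map Form.neg))
          (A.get ⟨i.1, List.mem_range.mp i.2⟩)))) := by
  intro H T hHT
  rw [Aux.htsat_oxList hHT, Aux.oxsem_iff, Aux.htsat_orList]
  constructor
  · rintro ⟨i, h1, h2⟩
    refine ⟨_, List.mem_map.mpr ⟨⟨i.1, List.mem_range.mpr i.2⟩, List.mem_attach _ _, rfl⟩, ?_⟩
    refine ⟨(Aux.htsat_andList _).mpr ?_, h2⟩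
    intro x hx
    rcases List.mem_map.mp hx with ⟨y, hy, rfl⟩
    exact (Aux.htsat_neg hHT y).mpr (h1 y hy)
  · rintro ⟨x, hx, h⟩
    rcases List.mem_map.mp hx with ⟨⟨i, hi⟩, _, rfl⟩
    refine ⟨⟨i, List.mem_range.mp hi⟩, ?_, h.2⟩
    intro y hy
    exact (Aux.htsat_neg hHT y).mp ((Aux.htsat_andList _).mp h.1 _ (List.mem_map.mpr ⟨y, hy, rfl⟩))
end

section
/- The leftmost occurrence of a repeated formula in an ordered disjunction cannot in general be removed: for distinct atoms a and b, the theory {a × b × a, a} has exactly one equilibrium model, ⟨{a},{a}⟩, whereas the theory {b × a, a} has exactly two equilibrium models, ⟨{a},{a}⟩ and ⟨{a,b},{a,b}⟩. In particular a × b × a and b × a are not HT-equivalent. -/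
theorem leftmost_occurrence_not_removable {α : Type} (a b : α) (hab : a ≠ b) :
    ({T : Set α |
        EqModel {Form.ox (Form.ox (Form.atom a) (Form.atom b)) (Form.atom a),
                 Form.atom a} T} = {{a}}) ∧
    ({T : Set α |
        EqModel {Form.ox (Form.atom b) (Form.atom a), Form.atom a} T} =
      {{a}, {a, b}}) ∧
    ¬ HTEquiv (Form.ox (Form.ox (Form.atom a) (Form.atom b)) (Form.atom a))
        (Form.ox (Form.atom b) (Form.atom a)) := by
  refine ⟨?_, ?_, ?_⟩
  · -- part 1
    ext T
    simp only [Set.mem_setOf_eq, Set.mem_singleton_iff]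
    constructor
    · rintro ⟨hsat, hmin⟩
      have ha : a ∈ T := hsat (Form.atom a) (Or.inr rfl)
      by_contra hne
      refine hmin {a} (HasSubset.Subset.ssubset_of_ne (Set.singleton_subset_iff.2 ha)
        (fun h => hne h.symm)) ?_
      rintro F (rfl | rfl)
      · exact Or.inl (Or.inl rfl)
      · exact rfl
    · rintro rfl
      refine ⟨?_, ?_⟩
      · rintro F (rfl | rfl)
        · exact Or.inl (Or.inl rfl)
        · exact rfl
      · intro H hH hall
        have haH : a ∈ H := hall (Form.atom a) (Or.inr rfl)
        exact hH.2 (Set.singleton_subset_iff.2 haH)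
  · -- part 2
    ext T
    simp only [Set.mem_setOf_eq, Set.mem_insert_iff, Set.mem_singleton_iff]
    constructor
    · rintro ⟨hsat, hmin⟩
      have ha : a ∈ T := hsat (Form.atom a) (Or.inr rfl)
      by_cases hb : b ∈ T
      · right
        by_contra hne
        refine hmin {a, b} (HasSubset.Subset.ssubset_of_ne ?_ (fun h => hne h.symm)) ?_
        · rintro x (rfl | rfl) <;> assumption
        rintro F (rfl | rfl)
        · exact Or.inl (Or.inr rfl)
        · exact Or.inl rfl
      · left
        by_contra hne
        refine hmin {a} (HasSubset.Subset.ssubset_of_ne (Set.singleton_subset_iff.2 ha)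
          (fun h => hne h.symm)) ?_
        rintro F (rfl | rfl)
        · refine Or.inr ⟨⟨fun h => hb h, Or.inl ?_⟩, rfl⟩
          simp only [Form.htsat, Set.mem_singleton_iff]
          exact fun h => hab (h.symm)
        · exact rfl
    · rintro (rfl | rfl)
      · refine ⟨?_, ?_⟩
        · rintro F (rfl | rfl)
          · refine Or.inr ⟨⟨fun h => hab h.symm, Or.inl ?_⟩, rfl⟩
            simp only [Form.htsat, Set.mem_singleton_iff]
            exact fun h => hab h.symm
          · exact rfl
        · intro H hH hall
          have haH : a ∈ H := hall (Form.atom a) (Or.inr rfl)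
          exact hH.2 (Set.singleton_subset_iff.2 haH)
      · refine ⟨?_, ?_⟩
        · rintro F (rfl | rfl)
          · exact Or.inl (Or.inr rfl)
          · exact Or.inl rfl
        · intro H hH hall
          have haH : a ∈ H := hall (Form.atom a) (Or.inr rfl)
          have hbT : b ∈ ({a, b} : Set α) := Or.inr rfl
          have hF2 := hall (Form.ox (Form.atom b) (Form.atom a)) (Or.inl rfl)
          have hbH : b ∈ H := by
            rcases hF2 with h | h
            · exact h
            · exact absurd hbT h.1.1
          refine hH.2 ?_
          rintro x (rfl | rfl) <;> assumption
  · -- part 3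
    intro h
    have hsub : ({b} : Set α) ⊆ {a, b} := Set.singleton_subset_iff.2 (Or.inr rfl)
    have hF2 : Form.htsat ({b} : Set α) {a, b}
        (Form.ox (Form.atom b) (Form.atom a)) := Or.inl rfl
    have hF1 := (h {b} {a, b} hsub).2 hF2
    have haT : a ∈ ({a, b} : Set α) := Or.inl rfl
    have haH : a ∉ ({b} : Set α) := fun h' => hab h'
    rcases hF1 with (h1 | h1) | h1
    · exact haH h1
    · exact h1.1.1 haT
    · have : Form.csat ({a, b} : Set α)
          (Form.ox (Form.atom a) (Form.atom b)) := Or.inl haT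
      exact h1.1.1 this
end

section
/- Let A be a list of n ≥ 0 formulas. Then the iterated ordered disjunction (×A) is HT-equivalent to the conjunction of the n implications (∧¬A[1..i−1]) → (A[i] ∨ ¬A[i]) for i = 1,…,n, together with the constraint (∧¬A) → ⊥, where ¬A is the list of negations of the elements of A. -/
section Aux
open Form
variable {α : Type} {H T : Set α}

theorem persist (hHT : H ⊆ T) : ∀ F : Form α, htsat H T F → csat T F
  | Form.atom p, h => hHT h
  | Form.fls, h => h
  | Form.and F G, h => ⟨persist hHT F h.1, persist hHT G h.2⟩
  | Form.or F G, h => h.elim (fun h => Or.inl (persist hHT F h)) (fun h => Or.inr (persist hHT G h))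
  | Form.imp _ _, h => h.1

theorem htsat_neg (hHT : H ⊆ T) (F : Form α) : htsat H T (neg F) ↔ ¬ csat T F := by
  constructor
  · exact fun h hc => h.1 hc
  · exact fun h => ⟨fun hc => absurd hc h, Or.inl (fun hh => h (persist hHT F hh))⟩

theorem csat_neg (F : Form α) : csat T (Form.neg F) ↔ ¬ csat T F := Iff.rfl

theorem htsat_tru : htsat H T (Form.tru : Form α) := ⟨id, Or.inl id⟩

theorem htsat_foldl_and (L : List (Form α)) (B : Form α) :
    htsat H T (L.foldl Form.and B) ↔ htsat H T B ∧ ∀ F ∈ L, htsat H T F := by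
  induction L generalizing B with
  | nil => simp
  | cons a as ih =>
      rw [List.foldl_cons, ih]
      simp only [List.mem_cons]
      constructor
      · rintro ⟨⟨hB, ha⟩, h⟩
        exact ⟨hB, fun F hF => hF.elim (fun e => e ▸ ha) (h F)⟩
      · rintro ⟨hB, h⟩
        exact ⟨⟨hB, h a (Or.inl rfl)⟩, fun F hF => h F (Or.inr hF)⟩

theorem csat_foldl_and (L : List (Form α)) (B : Form α) :
    csat T (L.foldl Form.and B) ↔ csat T B ∧ ∀ F ∈ L, csat T F := by
  induction L generalizing B with
  | nil => simp
  | cons a as ih =>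
      rw [List.foldl_cons, ih]
      simp only [List.mem_cons]
      constructor
      · rintro ⟨⟨hB, ha⟩, h⟩
        exact ⟨hB, fun F hF => hF.elim (fun e => e ▸ ha) (h F)⟩
      · rintro ⟨hB, h⟩
        exact ⟨⟨hB, h a (Or.inl rfl)⟩, fun F hF => h F (Or.inr hF)⟩

theorem htsat_andList (L : List (Form α)) :
    htsat H T (andList L) ↔ ∀ F ∈ L, htsat H T F := by
  cases L with
  | nil => simpa [andList] using htsat_tru
  | cons a as =>
      rw [andList, htsat_foldl_and]
      simp only [List.mem_cons]
      constructor
      · rintro ⟨ha, h⟩ F hF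
        exact hF.elim (fun e => e ▸ ha) (h F)
      · intro h
        exact ⟨h a (Or.inl rfl), fun F hF => h F (Or.inr hF)⟩

theorem csat_andList (L : List (Form α)) :
    csat T (andList L) ↔ ∀ F ∈ L, csat T F := by
  cases L with
  | nil => simp [andList, Form.tru, csat]
  | cons a as =>
      rw [andList, csat_foldl_and]
      simp only [List.mem_cons]
      constructor
      · rintro ⟨ha, h⟩ F hF
        exact hF.elim (fun e => e ▸ ha) (h F)
      · intro h
        exact ⟨h a (Or.inl rfl), fun F hF => h F (Or.inr hF)⟩

/-- classical sat of an iterated ordered disjunction, recursively -/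
def cs (T : Set α) : List (Form α) → Prop
  | [] => False
  | a :: as => Form.csat T a ∨ cs T as

/-- HT sat of an iterated ordered disjunction, recursively -/
def sel (H T : Set α) : List (Form α) → Prop
  | [] => False
  | a :: as => Form.htsat H T a ∨ (¬ Form.csat T a ∧ sel H T as)

theorem csat_ox (F G : Form α) : csat T (Form.ox F G) ↔ csat T F ∨ csat T G := by
  simp only [Form.ox, csat, csat_neg]
  tauto

theorem htsat_ox (hHT : H ⊆ T) (F G : Form α) :
    htsat H T (Form.ox F G) ↔ htsat H T F ∨ (¬ csat T F ∧ htsat H T G) := by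
  have hp := persist hHT F
  simp only [Form.ox, htsat, csat, Form.neg]
  tauto

theorem csat_foldl_ox (L : List (Form α)) (B : Form α) :
    csat T (L.foldl Form.ox B) ↔ csat T B ∨ cs T L := by
  induction L generalizing B with
  | nil => simp [cs]
  | cons a as ih =>
      rw [List.foldl_cons, ih, csat_ox, cs]
      tauto

theorem htsat_foldl_ox (hHT : H ⊆ T) (L : List (Form α)) (B : Form α) :
    htsat H T (L.foldl Form.ox B) ↔ htsat H T B ∨ (¬ csat T B ∧ sel H T L) := by
  induction L generalizing B with
  | nil => simp [sel]
  | cons a as ih =>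
      rw [List.foldl_cons, ih, htsat_ox hHT, csat_ox, sel]
      tauto

theorem htsat_oxList (hHT : H ⊆ T) (A : List (Form α)) :
    htsat H T (oxList A) ↔ sel H T A := by
  cases A with
  | nil => simp [oxList, sel, htsat]
  | cons a as => rw [oxList, htsat_foldl_ox hHT, sel]

theorem cs_iff (A : List (Form α)) :
    cs T A ↔ ∃ i, ∃ h : i < A.length, csat T A[i] := by
  induction A with
  | nil => simp [cs]
  | cons a as ih =>
      rw [cs, ih]
      constructor
      · rintro (h | ⟨i, hi, h⟩)
        · exact ⟨0, by simp, h⟩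
        · exact ⟨i + 1, by simpa using hi, by simpa using h⟩
      · rintro ⟨i, hi, h⟩
        cases i with
        | zero => exact Or.inl (by simpa using h)
        | succ k => exact Or.inr ⟨k, by simpa using hi, by simpa using h⟩

theorem sel_iff (A : List (Form α)) :
    sel H T A ↔ ∃ i, ∃ h : i < A.length, htsat H T A[i] ∧
      ∀ j, ∀ hj : j < i, ¬ csat T (A[j]'(lt_trans hj h)) := by
  induction A with
  | nil => simp [sel]
  | cons a as ih =>
      rw [sel, ih]
      constructor
      · rintro (h | ⟨hca, i, hi, hh, hmin⟩)
        · exact ⟨0, by simp, by simpa using h, by omega⟩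
        · refine ⟨i + 1, by simpa using hi, by simpa using hh, ?_⟩
          intro j hj
          cases j with
          | zero => simpa using hca
          | succ k => simpa using hmin k (by omega)
      · rintro ⟨i, hi, hh, hmin⟩
        cases i with
        | zero => exact Or.inl (by simpa using hh)
        | succ k =>
            refine Or.inr ⟨by simpa using hmin 0 (by omega), k, by simpa using hi,
              by simpa using hh, ?_⟩
            intro j hj
            simpa using hmin (j + 1) (by omega)

theorem key (hHT : H ⊆ T) (A : List (Form α)) :
    sel H T A ↔
      ((∀ i, ∀ h : i < A.length,
          (∀ j, ∀ hj : j < i, ¬ csat T (A[j]'(lt_trans hj h))) →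
            (htsat H T A[i] ∨ ¬ csat T A[i])) ∧
        ∃ i, ∃ h : i < A.length, csat T A[i]) := by
  rw [sel_iff]
  constructor
  · rintro ⟨i, hi, hh, hmin⟩
    refine ⟨?_, i, hi, persist hHT _ hh⟩
    intro k hk hP
    rcases lt_trichotomy k i with h | h | h
    · exact Or.inr (hmin k h)
    · subst h; exact Or.inl hh
    · exact absurd (persist hHT _ hh) (hP i h)
  · rintro ⟨hall, j, hj, hcj⟩
    classical
    have hex : ∃ m, ∃ h : m < A.length, csat T A[m] := ⟨j, hj, hcj⟩
    let p : ℕ → Prop := fun m => ∃ h : m < A.length, csat T A[m]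
    have hp : ∃ m, p m := hex
    obtain ⟨hlt, hc⟩ := Nat.find_spec hp
    refine ⟨Nat.find hp, hlt, ?_, ?_⟩
    · have := hall (Nat.find hp) hlt (fun k hk => ?_)
      · rcases this with h | h
        · exact h
        · exact absurd hc h
      · intro hck
        exact Nat.find_min hp hk ⟨lt_trans hk hlt, hck⟩
    · intro k hk hck
      exact Nat.find_min hp hk ⟨lt_trans hk hlt, hck⟩
end Aux

section Aux2
open Form
variable {α : Type} {H T : Set α}

theorem forall_mem_take {β : Type} (A : List β) (i : ℕ) (h : i ≤ A.length) (Q : β → Prop) :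
    (∀ G ∈ A.take i, Q G) ↔ ∀ j, ∀ hj : j < i, Q (A[j]'(lt_of_lt_of_le hj h)) := by
  constructor
  · intro hall j hj
    have hlt : j < (A.take i).length := by simp; omega
    have hmem := List.getElem_mem hlt
    rw [List.getElem_take] at hmem
    exact hall _ hmem
  · intro hall G hG
    obtain ⟨j, hj, rfl⟩ := List.mem_iff_getElem.mp hG
    have hj' : j < i := by simp at hj; omega
    rw [List.getElem_take]
    exact hall j hj'

theorem csat_negTake (A : List (Form α)) (i : ℕ) (h : i ≤ A.length) :
    csat T (andList ((A.take i).map Form.neg)) ↔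
      ∀ j, ∀ hj : j < i, ¬ csat T (A[j]'(lt_of_lt_of_le hj h)) := by
  rw [csat_andList, List.forall_mem_map]
  simp only [csat_neg]
  exact forall_mem_take A i h _

theorem htsat_negTake (hHT : H ⊆ T) (A : List (Form α)) (i : ℕ) (h : i ≤ A.length) :
    htsat H T (andList ((A.take i).map Form.neg)) ↔
      ∀ j, ∀ hj : j < i, ¬ csat T (A[j]'(lt_of_lt_of_le hj h)) := by
  rw [htsat_andList, List.forall_mem_map]
  simp only [htsat_neg hHT]
  exact forall_mem_take A i h _

theorem htsat_elem (hHT : H ⊆ T) (A : List (Form α)) (i : ℕ) (h : i < A.length) :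
    htsat H T (Form.imp (andList ((A.take i).map Form.neg))
        (Form.or (A[i]'h) (Form.neg (A[i]'h)))) ↔
      ((∀ j, ∀ hj : j < i, ¬ csat T (A[j]'(lt_trans hj h))) →
        (htsat H T (A[i]'h) ∨ ¬ csat T (A[i]'h))) := by
  simp only [htsat, csat, Form.neg]
  rw [htsat_negTake hHT A i (le_of_lt h), csat_negTake A i (le_of_lt h)]
  have hp := persist hHT (A[i]'h)
  tauto

theorem htsat_last (hHT : H ⊆ T) (A : List (Form α)) :
    htsat H T (Form.imp (andList (A.map Form.neg)) Form.fls) ↔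
      ∃ i, ∃ h : i < A.length, csat T A[i] := by
  have e2 : csat T (andList (A.map Form.neg)) ↔
      ∀ j, ∀ hj : j < A.length, ¬ csat T A[j] := by
    have := csat_negTake (T := T) A A.length le_rfl
    rwa [List.take_length] at this
  have e1 : htsat H T (andList (A.map Form.neg)) ↔
      ∀ j, ∀ hj : j < A.length, ¬ csat T A[j] := by
    have := htsat_negTake hHT A A.length le_rfl
    rwa [List.take_length] at this
  simp only [htsat, csat]
  rw [e1, e2]
  constructor
  · rintro ⟨h1, _⟩
    by_contra hne
    push_neg at hne
    exact h1 fun j hj => hne j hj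
  · rintro ⟨i, hi, hc⟩
    have hn : ¬ ∀ j, ∀ hj : j < A.length, ¬ csat T A[j] := fun hall => hall i hi hc
    exact ⟨fun h => hn h, Or.inl hn⟩
end Aux2


/-- (×A) is HT-equivalent to the conjunction of
    (∧¬A[1..i−1]) → (A[i] ∨ ¬A[i]) for i = 1..n together with (∧¬A) → ⊥. -/
theorem oxList_unfold_program {α : Type} (A : List (Form α)) :
    HTEquiv (oxList A)
      (andList
        (((List.range A.length).attach.map (fun i =>
            Form.imp (andList ((A.take i.1).map Form.neg))
              (Form.or (A.get ⟨i.1, List.mem_range.mp i.2⟩)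
                (Form.neg (A.get ⟨i.1, List.mem_range.mp i.2⟩))))) ++
          [Form.imp (andList (A.map Form.neg)) Form.fls])) := by
  intro H T hHT
  rw [htsat_oxList hHT, key hHT, htsat_andList, List.forall_mem_append]
  simp only [List.forall_mem_map, List.mem_attach, true_implies, Subtype.forall,
    List.mem_range, List.forall_mem_singleton, List.get_eq_getElem]
  simp only [htsat_elem hHT, htsat_last hHT]
end
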